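/- For all real θ, δf, δr and positive constants r, a, b with A = a/(2a² + 2b²), the 3×3 matrix JᵀWJ, where J is the 6×3 kinematic Jacobian with first column ((cos(δf+θ)+cos(δr+θ))/2, (sin(δf+θ)+sin(δr+θ))/2, A(sin δf − sin δr), 1/r, 0, 0)ᵀ, second column e₅, third column e₆, and W = diag(1,1,1,r²,1,1), is diagonal with entries S, 1, 1 where S = (1 + cos(δf − δr))/2 + A²(sin δf − sin δr)² + 1. Consequently the largest eigenvalue of JᵀWJ equals max(S, 1) ≤ 2 + 4A². -/

import Mathlib

open Matrix

lemma vec6_five {α : Type*} (x0 x1 x2 x3 x4 x5 : α) : ![x0,x1,x2,x3,x4,x5] 5 = x5 := rfl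

lemma diag_eig_mem {n : ℕ} (d : Fin n → ℝ) (μ : ℝ)
    (h : Module.End.HasEigenvalue (Matrix.toLin' (Matrix.diagonal d)) μ) :
    ∃ i, μ = d i := by
  obtain ⟨v, hv⟩ := h.exists_hasEigenvector
  have hmem := hv.apply_eq_smul
  obtain ⟨i, hi⟩ := Function.ne_iff.mp hv.2
  refine ⟨i, ?_⟩
  have h2 := congrFun hmem i
  simp only [Matrix.toLin'_apply, Matrix.mulVec_diagonal, Pi.smul_apply, smul_eq_mul] at h2
  have hi' : v i ≠ 0 := by simpa using hi
  exact (mul_right_cancel₀ hi' h2).symm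

lemma diag_hasEig {n : ℕ} (d : Fin n → ℝ) (i : Fin n) :
    Module.End.HasEigenvalue (Matrix.toLin' (Matrix.diagonal d)) (d i) := by
  apply Module.End.hasEigenvalue_of_hasEigenvector (x := Pi.single i 1)
  constructor
  · rw [Module.End.mem_eigenspace_iff]
    ext j
    by_cases hj : j = i <;>
      simp [Matrix.toLin'_apply, Matrix.mulVec_diagonal, Pi.single_apply, hj]
  · intro h
    have := congrFun h i
    simp at this

/-- Property 6 (induced-gain computation): JᵀWJ is diagonal with entries (S,1,1) and its
largest eigenvalue is max(S,1) ≤ 2 + 4A². -/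
theorem stmt_5 (θ δf δr r a b : ℝ) (hr : 0 < r) (ha : 0 < a) (hb : 0 < b) :
    let A : ℝ := a / (2 * a ^ 2 + 2 * b ^ 2)
    let S : ℝ := (1 + Real.cos (δf - δr)) / 2
        + A ^ 2 * (Real.sin δf - Real.sin δr) ^ 2 + 1
    let J : Matrix (Fin 6) (Fin 3) ℝ := Matrix.of (fun i j =>
      if j = 0 then
        ![(Real.cos (δf + θ) + Real.cos (δr + θ)) / 2,
          (Real.sin (δf + θ) + Real.sin (δr + θ)) / 2,
          A * (Real.sin δf - Real.sin δr), 1 / r, 0, 0] i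
      else if j = 1 then (if i = 4 then 1 else 0)
      else (if i = 5 then 1 else 0))
    let W : Matrix (Fin 6) (Fin 6) ℝ := Matrix.diagonal ![1, 1, 1, r ^ 2, 1, 1]
    Jᵀ * W * J = Matrix.diagonal ![S, 1, 1] ∧
    (∀ μ : ℝ, Module.End.HasEigenvalue (Matrix.toLin' (Jᵀ * W * J)) μ → μ ≤ max S 1) ∧
    Module.End.HasEigenvalue (Matrix.toLin' (Jᵀ * W * J)) (max S 1) ∧
    max S 1 ≤ 2 + 4 * A ^ 2 := by
  intro A S J W
  have hr0 : r ≠ 0 := ne_of_gt hr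
  have hc : Real.cos (δf + θ) * Real.cos (δr + θ) + Real.sin (δf + θ) * Real.sin (δr + θ)
      = Real.cos (δf - δr) := by
    rw [← Real.cos_sub]; ring_nf
  have hJ : Jᵀ * W * J = Matrix.diagonal ![S, 1, 1] := by
    ext i j
    fin_cases i <;> fin_cases j <;>
      simp [J, W, S, Matrix.mul_apply, Fin.sum_univ_six, Matrix.diagonal, vec6_five] <;>
      field_simp <;>
      linear_combination 2*hc + (Real.sin_sq_add_cos_sq (δf+θ))
        + (Real.sin_sq_add_cos_sq (δr+θ))
  refine ⟨hJ, ?_, ?_, ?_⟩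
  · intro μ hμ
    rw [hJ] at hμ
    obtain ⟨i, rfl⟩ := diag_eig_mem _ _ hμ
    fin_cases i
    · exact le_max_left _ _
    · exact le_max_right _ _
    · exact le_max_right _ _
  · rw [hJ]
    rcases le_total S 1 with h | h
    · rw [max_eq_right h]
      simpa using diag_hasEig ![S, 1, 1] 1
    · rw [max_eq_left h]
      simpa using diag_hasEig ![S, 1, 1] 0
  · have hA : 0 ≤ A ^ 2 := sq_nonneg A
    have h1 : Real.cos (δf - δr) ≤ 1 := Real.cos_le_one _
    have h2 : (Real.sin δf - Real.sin δr) ^ 2 ≤ 4 := by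
      nlinarith [Real.sin_le_one δf, Real.sin_le_one δr,
        Real.neg_one_le_sin δf, Real.neg_one_le_sin δr]
    have hS : S ≤ 2 + 4 * A ^ 2 := by
      simp only [S]
      nlinarith
    exact max_le hS (by nlinarith)
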